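/- Let $(\mathfrak{p}_{ij}^k)$ satisfy the comultiplicativity identity, $\mathfrak{p}_{ij}^k=0$ for $k>i$, $\mathfrak{p}_{i0}^i=(\mathfrak{p}_{10}^1)^i$, and $\mathfrak{p}_{10}^1\ne 0$. Then $\mathfrak{p}_{i1}^i=i\,\mathfrak{p}_{11}^1(\mathfrak{p}_{10}^1)^{i-1}$ for all $i\ge 1$. -/

import Mathlib

open Finset

/-- `p i 1 i = i * p 1 1 1 * (p 1 0 1)^(i-1)` for `i ≥ 1`. -/
theorem stmt4 {K : Type*} [Field K] [CharZero K]
    (p : ℕ → ℕ → ℕ → K)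
    (hcm : ∀ i j l h : ℕ,
      p i j (l + h) = ∑ ab ∈ Finset.HasAntidiagonal.antidiagonal i, ∑ cd ∈ Finset.HasAntidiagonal.antidiagonal j,
        p ab.1 cd.1 l * p ab.2 cd.2 h)
    (hvan : ∀ i j k, i < k → p i j k = 0)
    (hdiag : ∀ i, p i 0 i = (p 1 0 1) ^ i)
    (hne : p 1 0 1 ≠ 0) :
    ∀ i, 1 ≤ i → p i 1 i = (i : K) * p 1 1 1 * (p 1 0 1) ^ (i - 1) := by
  have h1 : (Finset.HasAntidiagonal.antidiagonal 1 : Finset (ℕ × ℕ)) = {(0,1), (1,0)} := by decide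
  have key : ∀ n : ℕ, p (n+1) 1 (n+1) = ((n:K)+1) * p 1 1 1 * p 1 0 1 ^ n := by
    intro n
    induction n with
    | zero => simp
    | succ n ih =>
      have h := hcm (n+2) 1 (n+1) 1
      have hmem : ((n+1, 1) : ℕ × ℕ) ∈ Finset.HasAntidiagonal.antidiagonal (n+2) := by
        simp [Finset.HasAntidiagonal.mem_antidiagonal]
      rw [show (n+1+1 : ℕ) = n + 2 from rfl] at *
      rw [h, Finset.sum_eq_single_of_mem _ hmem]
      · rw [h1, Finset.sum_pair (by decide)]
        simp only
        rw [hdiag, ih, hdiag]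
        push_cast
        ring
      · rintro ⟨a, c⟩ hac hne'
        have hac' : a + c = n + 2 := Finset.HasAntidiagonal.mem_antidiagonal.mp hac
        rw [h1, Finset.sum_pair (by decide)]
        simp only
        rcases lt_or_ge a (n+1) with hlt | hge
        · rw [hvan a 0 (n+1) hlt, hvan a 1 (n+1) hlt]; ring
        · have hc : c = 0 := by
            by_contra h0
            exact hne' (by simp only [Prod.mk.injEq]; omega)
          subst hc
          rw [hvan 0 1 1 (by omega), hvan 0 0 1 (by omega)]
          ring
  intro i hi
  obtain ⟨n, rfl⟩ : ∃ n, i = n + 1 := ⟨i - 1, by omega⟩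
  rw [key n]
  push_cast
  ring_nf
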